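/- arXiv:1106.5204 — 4 statements merged into one kernel-verified Lean document; each statement's English description precedes it below -/
import Mathlib

section
/- Let λ ∈ ℂ be a non-real eigenvalue of M (a non-real root of X⁴−X³−2X²+2X−1) and let u ∈ ℂ⁴ be a nonzero left eigenvector of M for λ (i.e., uᵀM = λuᵀ). Then there exists a constant C such that for every factor b of w, |u·ψ(b)| ≤ C. -/
/-- The morphism φ on letters: φ(0)=03, φ(1)=43, φ(3)=1, φ(4)=01. -/
def phiLetter : ℕ → List ℕ
  | 0 => [0, 3]
  | 1 => [4, 3]
  | 3 => [1]
  | 4 => [0, 1]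
  | _ => []

/-- The morphism φ on words, applied letterwise and concatenated. -/
def phi (x : List ℕ) : List ℕ := x.flatMap phiLetter

/-- The fixed point `w` of φ beginning with 0: `w n` is the `n`-th letter of
`φ^k([0])` for any `k` with `|φ^k([0])| > n` (e.g. `k = n+1`). -/
def w (n : ℕ) : ℕ := (phi^[n + 1] [0]).getD n 0

/-- The factor `w[p, q) = (w p, …, w (q-1))`. -/
def factorW (p q : ℕ) : List ℕ := (List.range' p (q - p)).map w

/-- The Parikh map ψ, sending a word over `{0,1,3,4}` to `(|x|₀,|x|₁,|x|₃,|x|₄) ∈ ℤ⁴`. -/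
def psi (x : List ℕ) : Fin 4 → ℤ :=
  ![(x.count 0 : ℤ), (x.count 1 : ℤ), (x.count 3 : ℤ), (x.count 4 : ℤ)]

/-- The incidence matrix of φ. -/
def M : Matrix (Fin 4) (Fin 4) ℤ :=
  !![1, 0, 0, 1; 0, 0, 1, 1; 1, 1, 0, 0; 0, 1, 0, 0]

/-- `η(p) = |φ(w[0,p))|`. -/
def eta (p : ℕ) : ℕ := (phi ((List.range p).map w)).length

/-- `σ(p) = ψ(w[0,p))`, the Parikh vector of the prefix of `w` of length `p`. -/
def sigmaW (p : ℕ) : Fin 4 → ℤ := psi ((List.range p).map w)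

/-- The parent of a position `x`: the unique `t` with `η(t) ≤ x < η(t+1)`. -/
def par (x : ℕ) : ℕ := Nat.findGreatest (fun t => eta t ≤ x) x

def L (k : ℕ) : List ℕ := phi^[k] [0]

lemma phi_append (x y : List ℕ) : phi (x ++ y) = phi x ++ phi y :=
  List.flatMap_append

lemma L_succ (k : ℕ) : L (k + 1) = phi (L k) := Function.iterate_succ_apply' phi k [0]

lemma phi_prefix {x y : List ℕ} (h : x <+: y) : phi x <+: phi y := by
  obtain ⟨t, rfl⟩ := h
  exact ⟨phi t, (phi_append x t).symm⟩

lemma L_prefix_succ (k : ℕ) : L k <+: L (k + 1) := by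
  induction k with
  | zero => exact ⟨[3], rfl⟩
  | succ k ih => rw [L_succ, L_succ]; exact phi_prefix ih

lemma L_prefix {k m : ℕ} (h : k ≤ m) : L k <+: L m := by
  induction m with
  | zero => simp_all
  | succ m ih =>
    rcases Nat.lt_or_ge k (m+1) with h' | h'
    · exact (ih (by omega)).trans (L_prefix_succ m)
    · have : k = m + 1 := by omega
      subst this; rfl

lemma mem_L {k : ℕ} {a : ℕ} (h : a ∈ L k) : a = 0 ∨ a = 1 ∨ a = 3 ∨ a = 4 := by
  induction k generalizing a with
  | zero => simp [L] at h; omega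
  | succ k ih =>
    rw [L_succ, phi] at h
    obtain ⟨b, hb, hab⟩ := List.mem_flatMap.1 h
    rcases ih hb with rfl | rfl | rfl | rfl <;> simp [phiLetter] at hab <;> omega

lemma len_phi {x : List ℕ} (hx : ∀ a ∈ x, a = 0 ∨ a = 1 ∨ a = 3 ∨ a = 4) :
    x.length ≤ (phi x).length := by
  induction x with
  | nil => simp [phi]
  | cons a t ih =>
    rw [phi, List.flatMap_cons, List.length_append]
    have h1 : 1 ≤ (phiLetter a).length := by
      rcases hx a (by simp) with rfl | rfl | rfl | rfl <;> simp [phiLetter]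
    have h2 := ih (fun b hb => hx b (by simp [hb]))
    rw [phi] at h2
    simp only [List.length_cons]
    omega

lemma L_head (k : ℕ) : ∃ t, L k = 0 :: t := by
  obtain ⟨t, ht⟩ := L_prefix (Nat.zero_le k)
  exact ⟨t, by simpa [L] using ht.symm⟩

lemma len_L (k : ℕ) : k + 1 ≤ (L k).length := by
  induction k with
  | zero => simp [L]
  | succ k ih =>
    obtain ⟨t, ht⟩ := L_head k
    have htm : ∀ a ∈ t, a = 0 ∨ a = 1 ∨ a = 3 ∨ a = 4 :=
      fun a ha => mem_L (k := k) (by rw [ht]; exact List.mem_cons_of_mem _ ha)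
    have := len_phi htm
    rw [L_succ, ht, phi, List.flatMap_cons]
    have hlt : t.length = (L k).length - 1 := by rw [ht]; simp
    simp only [List.length_append, phiLetter]
    rw [phi] at this
    simp only [List.length_cons, List.length_nil]
    omega

lemma getD_prefix {x y : List ℕ} (h : x <+: y) {n : ℕ} (hn : n < x.length) :
    x.getD n 0 = y.getD n 0 := by
  obtain ⟨t, rfl⟩ := h
  rw [List.getD_eq_getElem _ _ hn, List.getD_eq_getElem _ _ (by simp; omega)]
  exact (List.getElem_append_left hn).symm

lemma w_eq {k n : ℕ} (hn : n < (L k).length) : w n = (L k).getD n 0 := by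
  rcases le_total (n + 1) k with h | h
  · exact getD_prefix (L_prefix h) (by have := len_L (n+1); omega)
  · exact (getD_prefix (L_prefix h) hn).symm

lemma prefixW {p k : ℕ} (h : p ≤ (L k).length) :
    (List.range p).map w = (L k).take p := by
  apply List.ext_getElem
  · simp; omega
  · intro n h1 h2
    simp only [List.getElem_map, List.getElem_range, List.getElem_take]
    simp only [List.length_map, List.length_range] at h1
    rw [w_eq (k := k) (by omega), List.getD_eq_getElem _ _ (by omega)]
lemma w_mem (n : ℕ) : w n = 0 ∨ w n = 1 ∨ w n = 3 ∨ w n = 4 := by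
  have hn : n < (L (n + 1)).length := by have := len_L (n + 1); omega
  have : w n = (L (n+1)).getD n 0 := rfl
  rw [this, List.getD_eq_getElem _ _ hn]
  exact mem_L (List.getElem_mem hn)

lemma phi_prefixW (p : ℕ) : phi ((List.range p).map w) = (List.range (eta p)).map w := by
  have hp : p ≤ (L p).length := by have := len_L p; omega
  have h1 : (List.range p).map w = (L p).take p := prefixW hp
  have h2 : phi ((L p).take p) <+: L (p + 1) := by
    rw [L_succ]; exact phi_prefix (List.take_prefix p (L p))
  have h3 : eta p ≤ (L (p+1)).length := by
    have := h2.length_le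
    rw [← h1] at this
    exact this
  rw [h1, prefixW h3]
  have h4 := List.prefix_iff_eq_take.1 h2
  have heta : eta p = (phi ((L p).take p)).length := by rw [eta, h1]
  rw [heta]
  exact h4

lemma psi_append (x y : List ℕ) : psi (x ++ y) = psi x + psi y := by
  funext i
  fin_cases i <;> simp [psi, List.count_append]

lemma phiLetter_other {a : ℕ} (h0 : a ≠ 0) (h1 : a ≠ 1) (h3 : a ≠ 3) (h4 : a ≠ 4) :
    phiLetter a = [] := by
  unfold phiLetter
  split <;> first | rfl | omega

lemma psi_single_other {a : ℕ} (h0 : a ≠ 0) (h1 : a ≠ 1) (h3 : a ≠ 3) (h4 : a ≠ 4) :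
    psi [a] = 0 := by
  funext i
  fin_cases i <;> simp [psi, List.count_singleton'] <;> omega

lemma psi_letter (a : ℕ) : psi (phiLetter a) = M.mulVec (psi [a]) := by
  by_cases h0 : a = 0
  · subst h0; funext i; fin_cases i <;> decide
  by_cases h1 : a = 1
  · subst h1; funext i; fin_cases i <;> decide
  by_cases h3 : a = 3
  · subst h3; funext i; fin_cases i <;> decide
  by_cases h4 : a = 4
  · subst h4; funext i; fin_cases i <;> decide
  rw [phiLetter_other h0 h1 h3 h4, psi_single_other h0 h1 h3 h4]
  funext i; fin_cases i <;> decide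

lemma psi_phi (x : List ℕ) : psi (phi x) = M.mulVec (psi x) := by
  induction x with
  | nil => funext i; fin_cases i <;> decide
  | cons a t ih =>
    have h1 : phi (a :: t) = phiLetter a ++ phi t := List.flatMap_cons
    have h2 : (a :: t) = [a] ++ t := rfl
    rw [h1, psi_append, ih, h2, psi_append, Matrix.mulVec_add, psi_letter]

lemma sigmaW_eta (p : ℕ) : sigmaW (eta p) = M.mulVec (sigmaW p) := by
  rw [sigmaW, ← phi_prefixW, psi_phi]; rfl

lemma sigmaW_add {p q : ℕ} (h : p ≤ q) :
    sigmaW q = sigmaW p + psi (factorW p q) := by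
  rw [sigmaW, sigmaW, factorW, ← psi_append, ← List.map_append]
  simp only [List.range_eq_range']
  have h2 := List.range'_append (s := 0) (m := p) (n := q - p) (step := 1)
  simp only [one_mul, zero_add] at h2
  rw [h2, show p + (q - p) = q by omega]

lemma eta_succ (t : ℕ) : eta (t + 1) = eta t + (phiLetter (w t)).length := by
  rw [eta, eta, List.range_succ, List.map_append, phi_append, List.length_append]
  simp [phi]

lemma phiLetter_len_le (a : ℕ) : (phiLetter a).length ≤ 2 := by
  unfold phiLetter
  split <;> simp

lemma phiLetter_len_ge (n : ℕ) : 1 ≤ (phiLetter (w n)).length := by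
  rcases w_mem n with h | h | h | h <;> rw [h] <;> simp [phiLetter]

lemma eta_ge (p : ℕ) : p ≤ eta p := by
  induction p with
  | zero => simp [eta]
  | succ p ih => have := phiLetter_len_ge p; rw [eta_succ]; omega

lemma w_zero : w 0 = 0 := rfl

lemma eta_gt {p : ℕ} (hp : 1 ≤ p) : p + 1 ≤ eta p := by
  induction p with
  | zero => omega
  | succ p ih =>
    rcases Nat.eq_or_lt_of_le hp with h | h
    · have h1 : p = 0 := by omega
      subst h1
      rw [eta_succ, w_zero]
      simp [eta, phiLetter]
    · have := phiLetter_len_ge p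
      rw [eta_succ]
      have := ih (by omega)
      omega

lemma eta_zero : eta 0 = 0 := rfl

lemma par_le (x : ℕ) : eta (par x) ≤ x :=
  Nat.findGreatest_spec (P := fun t => eta t ≤ x) (Nat.zero_le x) (by show eta 0 ≤ x; rw [eta_zero]; omega)

lemma par_lt (x : ℕ) : x < eta (par x + 1) := by
  rcases Nat.lt_or_ge x (par x + 1) with h | h
  · have hle : par x ≤ x := Nat.findGreatest_le x
    have : par x = x := by omega
    rw [this]
    have := eta_ge (x + 1); omega
  · have h2 := Nat.findGreatest_is_greatest (P := fun t => eta t ≤ x) (n := x)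
      (k := par x + 1) (Nat.lt_succ_self (par x)) h
    omega

lemma par_lt_self {x : ℕ} (hx : 1 ≤ x) : par x < x := by
  have h1 : par x ≤ x := Nat.findGreatest_le x
  rcases Nat.eq_or_lt_of_le h1 with h | h
  · exfalso
    have h2 := par_le x
    rw [h] at h2
    have := eta_gt hx
    omega
  · exact h

lemma gap_le (x : ℕ) : x - eta (par x) ≤ 1 := by
  have h1 := par_le x
  have h2 := par_lt x
  have h3 := eta_succ (par x)
  have h4 := phiLetter_len_le (w (par x))
  omega
lemma psi_bounds (l : List ℕ) (i : Fin 4) : 0 ≤ psi l i ∧ psi l i ≤ l.length := by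
  fin_cases i <;>
    exact ⟨by simp [psi], by simpa [psi] using Int.ofNat_le.mpr (List.count_le_length (l := l))⟩

lemma noise_bound (u : Fin 4 → ℂ) (l : List ℕ) :
    ‖∑ i, u i * (psi l i : ℂ)‖ ≤ (∑ i, ‖u i‖) * l.length := by
  calc ‖∑ i, u i * (psi l i : ℂ)‖ ≤ ∑ i, ‖u i * (psi l i : ℂ)‖ :=
        norm_sum_le _ _
    _ ≤ ∑ i, ‖u i‖ * l.length := by
        apply Finset.sum_le_sum
        intro i _
        rw [norm_mul]
        apply mul_le_mul_of_nonneg_left _ (norm_nonneg _)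
        obtain ⟨h1, h2⟩ := psi_bounds l i
        rw [Complex.norm_intCast, abs_of_nonneg (by exact_mod_cast h1)]
        exact_mod_cast h2
    _ = _ := by rw [← Finset.sum_mul]


/-- If `λ` is a non-real eigenvalue of `M` (a non-real root of
`X⁴−X³−2X²+2X−1`) and `u` is a nonzero left eigenvector for `λ`, then `|u·ψ(b)|` is
uniformly bounded over all factors `b` of `w`. -/
theorem bounded_eigencoordinate_of_nonreal (lam : ℂ) (u : Fin 4 → ℂ)
    (hroot : lam ^ 4 - lam ^ 3 - 2 * lam ^ 2 + 2 * lam - 1 = 0) (him : lam.im ≠ 0)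
    (hu : u ≠ 0) (heig : Matrix.vecMul u (M.map (Int.cast : ℤ → ℂ)) = lam • u) :
    ∃ C : ℝ, ∀ p q : ℕ, p ≤ q →
      ‖∑ i, u i * (psi (factorW p q) i : ℂ)‖ ≤ C := by
  -- |λ| < 1
  have hr : ‖lam‖ < 1 := by
    have h1 : (lam ^ 4 - lam ^ 3 - 2 * lam ^ 2 + 2 * lam - 1).re = 0 := by rw [hroot]; rfl
    have h2 : (lam ^ 4 - lam ^ 3 - 2 * lam ^ 2 + 2 * lam - 1).im = 0 := by rw [hroot]; rfl
    set a := lam.re with ha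
    set b := lam.im with hb
    simp only [Complex.sub_re, Complex.add_re, Complex.sub_im, Complex.add_im,
      Complex.mul_re, Complex.mul_im, Complex.re_ofNat, Complex.im_ofNat,
      Complex.one_re, Complex.one_im, pow_succ, pow_zero, one_mul] at h1 h2
    have hre : a^4 - 6*a^2*b^2 + b^4 - (a^3 - 3*a*b^2) - 2*(a^2-b^2) + 2*a - 1 = 0 := by
      rw [← h1]; ring
    have him2 : b * (4*a^3 - 4*a*b^2 - 3*a^2 + b^2 - 4*a + 2) = 0 := by
      rw [← h2]; ring
    have him3 : 4*a^3 - 4*a*b^2 - 3*a^2 + b^2 - 4*a + 2 = 0 :=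
      (mul_eq_zero.1 him2).resolve_left him
    have key : a^2 + b^2 < 1 := by
      nlinarith [sq_nonneg b, sq_nonneg a, sq_nonneg (a*b), sq_nonneg (a^2+b^2),
        sq_nonneg (a^2+b^2-1), sq_nonneg (a-1), sq_nonneg (a+1), sq_nonneg (b^2-1),
        sq_nonneg (a^2-b^2)]
    have h3 : ‖lam‖ ^ 2 < 1 := by
      rw [Complex.sq_norm, Complex.normSq_apply, ← ha, ← hb]; nlinarith [key]
    nlinarith [norm_nonneg lam, h3]
  set r := ‖lam‖ with hrdef
  have hr0 : 0 ≤ r := norm_nonneg lam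
  set D := ∑ i, ‖u i‖ with hD
  have hD0 : 0 ≤ D := Finset.sum_nonneg fun i _ => norm_nonneg _
  have h1r : (0:ℝ) < 1 - r := by linarith
  set C0 := D / (1 - r) with hC0
  have hC00 : 0 ≤ C0 := div_nonneg hD0 (le_of_lt h1r)
  have hC0eq : r * C0 + D = C0 := by
    rw [hC0]; field_simp; ring
  set v : ℕ → ℂ := fun p => ∑ i, u i * (sigmaW p i : ℂ) with hv
  -- eigen action
  have key_mul : ∀ s : Fin 4 → ℤ,
      (∑ i, u i * ((M.mulVec s) i : ℂ)) = lam * ∑ i, u i * (s i : ℂ) := by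
    intro s
    have hcast : (fun i => ((M.mulVec s) i : ℂ))
        = (M.map (Int.cast : ℤ → ℂ)).mulVec (fun j => (s j : ℂ)) := by
      funext i
      simp only [Matrix.mulVec, dotProduct, Matrix.map_apply]
      push_cast
      rfl
    calc (∑ i, u i * ((M.mulVec s) i : ℂ))
        = dotProduct u (fun i => ((M.mulVec s) i : ℂ)) := rfl
      _ = dotProduct u ((M.map (Int.cast : ℤ → ℂ)).mulVec fun j => (s j : ℂ)) := by
          rw [hcast]
      _ = dotProduct (Matrix.vecMul u (M.map (Int.cast : ℤ → ℂ))) (fun j => (s j : ℂ)) :=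
          Matrix.dotProduct_mulVec _ _ _
      _ = dotProduct (lam • u) (fun j => (s j : ℂ)) := by rw [heig]
      _ = lam * ∑ i, u i * (s i : ℂ) := by
          rw [smul_dotProduct]
          rfl
  have hv_eta : ∀ p, v (eta p) = lam * v p := by
    intro p
    simp only [hv, sigmaW_eta]
    exact key_mul _
  have hv_split : ∀ p q : ℕ, p ≤ q →
      v q = v p + ∑ i, u i * (psi (factorW p q) i : ℂ) := by
    intro p q h
    simp only [hv, sigmaW_add h, Pi.add_apply]
    rw [← Finset.sum_add_distrib]
    exact Finset.sum_congr rfl fun i _ => by push_cast; ring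
  have main : ∀ x, ‖v x‖ ≤ C0 := by
    intro x
    induction x using Nat.strong_induction_on with
    | _ x ih =>
      rcases Nat.eq_zero_or_pos x with rfl | hx
      · have h0 : v 0 = 0 := by
          simp [hv, sigmaW, psi, Fin.sum_univ_four]
        rw [h0, norm_zero]
        exact hC00
      · have h1 := par_le x
        have h2 := gap_le x
        have h3 := par_lt_self hx
        have hsplit := hv_split (eta (par x)) x h1
        have hlen : ((factorW (eta (par x)) x).length : ℝ) ≤ 1 := by
          simp only [factorW, List.length_map, List.length_range']
          exact_mod_cast h2
        have hnoise := noise_bound u (factorW (eta (par x)) x)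
        have hnoise2 : ‖∑ i, u i * (psi (factorW (eta (par x)) x) i : ℂ)‖ ≤ D := by
          calc _ ≤ D * ((factorW (eta (par x)) x).length : ℝ) := hnoise
            _ ≤ D * 1 := mul_le_mul_of_nonneg_left hlen hD0
            _ = D := mul_one D
        have heta2 : ‖v (eta (par x))‖ = r * ‖v (par x)‖ := by
          rw [hv_eta, norm_mul]
        have hih := ih (par x) h3
        calc ‖v x‖
            ≤ ‖v (eta (par x))‖
              + ‖∑ i, u i * (psi (factorW (eta (par x)) x) i : ℂ)‖ := by
              rw [hsplit]; exact norm_add_le _ _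
          _ ≤ r * C0 + D := by
              rw [heta2]
              have : r * ‖v (par x)‖ ≤ r * C0 :=
                mul_le_mul_of_nonneg_left hih hr0
              linarith
          _ = C0 := hC0eq
  refine ⟨2 * C0, fun p q hpq => ?_⟩
  have hsp := hv_split p q hpq
  have : (∑ i, u i * (psi (factorW p q) i : ℂ)) = v q - v p := by rw [hsp]; ring
  rw [this]
  have habs : ‖v q - v p‖ ≤ ‖v q‖ + ‖v p‖ := by
    have h := norm_add_le (v q) (-v p)
    rw [norm_neg] at h
    simpa [sub_eq_add_neg] using h
  have hq := main q
  have hp := main p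
  linarith
end

section
/- Let λ ∈ ℂ be a non-real eigenvalue of M and let u ∈ ℂ⁴ be a nonzero left eigenvector of M for λ (uᵀM = λuᵀ). Then there exist real constants α > 0 and β > 0 such that for all integers m, n, the vector v = m·(1,−2,2,−1) + n·(1,−1,−1,1) ∈ 𝔏 satisfies |u·v| ≥ α|m| and |u·v| ≥ β|n|. -/
/-- If `λ` is a non-real eigenvalue of `M` and `u` a nonzero left
eigenvector for `λ`, then there are constants `α, β > 0` with
`|u·v| ≥ α|m|` and `|u·v| ≥ β|n|` for every `v = m·(1,−2,2,−1) + n·(1,−1,−1,1) ∈ 𝔏`. -/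
theorem lattice_eigencoordinate_lower_bound (lam : ℂ) (u : Fin 4 → ℂ)
    (hroot : lam ^ 4 - lam ^ 3 - 2 * lam ^ 2 + 2 * lam - 1 = 0) (him : lam.im ≠ 0)
    (hu : u ≠ 0) (heig : Matrix.vecMul u (M.map (Int.cast : ℤ → ℂ)) = lam • u) :
    ∃ α β : ℝ, 0 < α ∧ 0 < β ∧ ∀ m n : ℤ,
      α * |(m : ℝ)| ≤
          ‖(∑ i, u i * ((m • ![(1 : ℤ), -2, 2, -1] + n • ![(1 : ℤ), -1, -1, 1]) i : ℂ))‖ ∧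
      β * |(n : ℝ)| ≤
          ‖(∑ i, u i * ((m • ![(1 : ℤ), -2, 2, -1] + n • ![(1 : ℤ), -1, -1, 1]) i : ℂ))‖ := by
  have h0 := congrFun heig 0
  have h1 := congrFun heig 1
  have h2 := congrFun heig 2
  have h3 := congrFun heig 3
  simp [Matrix.vecMul, dotProduct, M, Fin.sum_univ_four, Matrix.map_apply,
    Matrix.vecHead, Matrix.vecTail] at h0 h1 h2 h3
  -- component formulas
  have hu2 : u 2 = lam * u 0 - u 0 := by linear_combination h0
  have hu1 : u 1 = lam ^ 2 * u 0 - lam * u 0 := by linear_combination h2 + lam * h0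
  have hu3 : u 3 = lam ^ 3 * u 0 - lam ^ 2 * u 0 - lam * u 0 + u 0 := by
    linear_combination h1 + lam * h2 + (lam ^ 2 - 1) * h0
  have h00 : u 0 ≠ 0 := by
    intro h
    apply hu
    funext i
    have z1 : u 1 = 0 := by rw [hu1, h]; ring
    have z2 : u 2 = 0 := by rw [hu2, h]; ring
    have z3 : u 3 = 0 := by rw [hu3, h]; ring
    fin_cases i <;> simp [h, z1, z2, z3]
  set b : ℂ := (starRingEnd ℂ) lam with hbdef
  have hb : b ^ 4 - b ^ 3 - 2 * b ^ 2 + 2 * b - 1 = 0 := by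
    have := congrArg (starRingEnd ℂ) hroot
    simpa only [map_sub, map_add, map_mul, map_pow, map_one, map_zero, map_ofNat] using this
  have hab : lam - b ≠ 0 := by
    intro h
    rw [hbdef, Complex.sub_conj] at h
    simp only [Complex.ofReal_mul, Complex.ofReal_ofNat, mul_eq_zero, Complex.I_ne_zero,
      or_false, Complex.ofReal_eq_zero, OfNat.ofNat_ne_zero, false_or] at h
    exact him h
  have hK : 3*lam^2*b^2 - 4*lam^2*b - lam^2 - 4*lam*b^2 + 10*lam*b - 7*lam - b^2 - 7*b + 13 ≠ 0 := by
    intro h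
    have h397 : (397833811 : ℂ) = 0 := by
      linear_combination
        ((-22869441) + (49272487)*b + (-13948997)*b^2 + (-40695877)*b^3 + (49272487)*lam +
          (2041417)*lam*b + (-10641716)*lam*b^2 + (-1856396)*lam*b^3 + (-13948997)*lam^2 +
          (-10641716)*lam^2*b + (23279247)*lam^2*b^2 + (8483274)*lam^2*b^3 + (-40695877)*lam^3 +
          (-1856396)*lam^3*b + (8483274)*lam^3*b^2 + (-7353335)*lam^3*b^3) * h
        - ((339516013) + (-162886390)*b + (-60868065)*b^2 + (-21942690)*b^3 + (-16698639)*b^4 +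
          (32803157)*b^5 + (40695877)*lam + (164639904)*lam*b + (-123145321)*lam*b^2 +
          (-32148949)*lam*b^3 + (54863162)*lam*b^4 + (-22060005)*lam*b^5) * hroot
        - ((355620531) + (73499034)*b + (-162292269)*lam + (76973585)*lam*b + (-94265343)*lam^2 +
          (-13418997)*lam^2*b + (59768142)*lam^3 + (-43465802)*lam^3*b) * hb
    norm_num at h397
  set A : ℂ := u 0 * (-lam ^ 3 - lam ^ 2 + 5 * lam - 2) with hA
  set B : ℂ := u 0 * (lam ^ 3 - 2 * lam ^ 2 - lam + 3) with hB
  have hsum : ∀ m n : ℤ,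
      (∑ i, u i * ((m • ![(1 : ℤ), -2, 2, -1] + n • ![(1 : ℤ), -1, -1, 1]) i : ℂ)) =
        (m : ℂ) * A + (n : ℂ) * B := by
    intro m n
    rw [Fin.sum_univ_four]
    simp only [Pi.add_apply, Pi.smul_apply, smul_eq_mul, Matrix.cons_val_zero,
      Matrix.cons_val_one, Matrix.head_cons, Matrix.cons_val_two, Matrix.tail_cons,
      Matrix.cons_val_three]
    push_cast
    rw [hu1, hu2, hu3, hA, hB]
    ring
  have hcA : (starRingEnd ℂ) A = (starRingEnd ℂ) (u 0) * (-b ^ 3 - b ^ 2 + 5 * b - 2) := by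
    rw [hA]
    simp only [map_mul, map_add, map_sub, map_neg, map_pow, map_ofNat, hbdef]
  have hcB : (starRingEnd ℂ) B = (starRingEnd ℂ) (u 0) * (b ^ 3 - 2 * b ^ 2 - b + 3) := by
    rw [hB]
    simp only [map_mul, map_add, map_sub, map_neg, map_pow, map_ofNat, hbdef]
  have hcu : (starRingEnd ℂ) (u 0) ≠ 0 := by simpa using h00
  have hkey : (starRingEnd ℂ) B * A - B * (starRingEnd ℂ) A =
      ((starRingEnd ℂ) (u 0) * u 0) * (lam - b) *
        (3*lam^2*b^2 - 4*lam^2*b - lam^2 - 4*lam*b^2 + 10*lam*b - 7*lam - b^2 - 7*b + 13) := by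
    rw [hA, hB, hcA, hcB]
    ring
  have hne : (starRingEnd ℂ) B * A - B * (starRingEnd ℂ) A ≠ 0 := by
    rw [hkey]
    exact mul_ne_zero (mul_ne_zero (mul_ne_zero hcu h00) hab) hK
  have hIm : ((starRingEnd ℂ) B * A).im ≠ 0 := by
    intro h
    apply hne
    have hc : (starRingEnd ℂ) ((starRingEnd ℂ) B * A) = B * (starRingEnd ℂ) A := by
      rw [map_mul, Complex.conj_conj]
    rw [← hc, Complex.sub_conj, h]
    simp
  have hIm2 : ((starRingEnd ℂ) A * B).im ≠ 0 := by
    have hc : (starRingEnd ℂ) ((starRingEnd ℂ) B * A) = (starRingEnd ℂ) A * B := by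
      rw [map_mul, Complex.conj_conj]
      exact mul_comm _ _
    rw [← hc, Complex.conj_im]
    exact neg_ne_zero.mpr hIm
  have hBne : B ≠ 0 := by
    intro h
    apply hIm
    rw [h]
    simp
  have hAne : A ≠ 0 := by
    intro h
    apply hIm
    rw [h]
    simp
  have habsA : 0 < ‖A‖ := norm_pos_iff.mpr hAne
  have habsB : 0 < ‖B‖ := norm_pos_iff.mpr hBne
  refine ⟨|((starRingEnd ℂ) B * A).im| / ‖B‖,
    |((starRingEnd ℂ) A * B).im| / ‖A‖,
    div_pos (abs_pos.mpr hIm) habsB, div_pos (abs_pos.mpr hIm2) habsA, ?_⟩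
  intro m n
  rw [hsum m n]
  set z : ℂ := (m : ℂ) * A + (n : ℂ) * B with hz
  have key1 : ((starRingEnd ℂ) B * z).im = (m : ℝ) * ((starRingEnd ℂ) B * A).im := by
    have e1 : (starRingEnd ℂ) B * z =
        (m : ℂ) * ((starRingEnd ℂ) B * A) + (n : ℂ) * ((starRingEnd ℂ) B * B) := by
      rw [hz]; ring
    have e2 : (starRingEnd ℂ) B * B = ((Complex.normSq B : ℝ) : ℂ) := by
      rw [mul_comm, Complex.mul_conj]
    rw [e1, e2]
    simp [Complex.add_im, Complex.mul_im]
  have key2 : ((starRingEnd ℂ) A * z).im = (n : ℝ) * ((starRingEnd ℂ) A * B).im := by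
    have e1 : (starRingEnd ℂ) A * z =
        (n : ℂ) * ((starRingEnd ℂ) A * B) + (m : ℂ) * ((starRingEnd ℂ) A * A) := by
      rw [hz]; ring
    have e2 : (starRingEnd ℂ) A * A = ((Complex.normSq A : ℝ) : ℂ) := by
      rw [mul_comm, Complex.mul_conj]
    rw [e1, e2]
    simp [Complex.add_im, Complex.mul_im]
  constructor
  · rw [div_mul_eq_mul_div, div_le_iff₀ habsB]
    calc |((starRingEnd ℂ) B * A).im| * |(m : ℝ)|
        = |((starRingEnd ℂ) B * z).im| := by rw [key1, abs_mul]; ring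
      _ ≤ ‖(starRingEnd ℂ) B * z‖ := Complex.abs_im_le_norm _
      _ = ‖z‖ * ‖B‖ := by
          rw [norm_mul, Complex.norm_conj]; ring
  · rw [div_mul_eq_mul_div, div_le_iff₀ habsA]
    calc |((starRingEnd ℂ) A * B).im| * |(n : ℝ)|
        = |((starRingEnd ℂ) A * z).im| := by rw [key2, abs_mul]; ring
      _ ≤ ‖(starRingEnd ℂ) A * z‖ := Complex.abs_im_le_norm _
      _ = ‖z‖ * ‖A‖ := by
          rw [norm_mul, Complex.norm_conj]; ring
end

section
/- The polynomial p(X) = X⁴ − X³ − 2X² + 2X − 1 over ℂ has exactly two real roots: one real root λ₁ with 1.6902 < λ₁ < 1.6903 and one real root λ₂ with −1.5051 < λ₂ < −1.5050; moreover, every root z ∈ ℂ of p with z ∉ ℝ satisfies |z| < 1. -/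
/-- The polynomial `X⁴ − X³ − 2X² + 2X − 1` has exactly two real roots,
`λ₁ ∈ (1.6902, 1.6903)` and `λ₂ ∈ (−1.5051, −1.5050)`, and every non-real complex root
has absolute value less than 1. -/
theorem char_poly_roots :
    ∃ lam₁ lam₂ : ℝ,
      (1.6902 < lam₁ ∧ lam₁ < 1.6903) ∧
      (-1.5051 < lam₂ ∧ lam₂ < -1.5050) ∧
      (∀ x : ℝ, x ^ 4 - x ^ 3 - 2 * x ^ 2 + 2 * x - 1 = 0 ↔ (x = lam₁ ∨ x = lam₂)) ∧
      (∀ z : ℂ, z ^ 4 - z ^ 3 - 2 * z ^ 2 + 2 * z - 1 = 0 → z.im ≠ 0 → ‖z‖ < 1) := by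
  set f : ℝ → ℝ := fun x => x ^ 4 - x ^ 3 - 2 * x ^ 2 + 2 * x - 1 with hf
  have hcont : Continuous f := by fun_prop
  -- first root by IVT
  obtain ⟨a, hamem, ha⟩ :=
    intermediate_value_Ioo (by norm_num : (1.6902:ℝ) ≤ 1.6903) hcont.continuousOn
      (show (0:ℝ) ∈ Set.Ioo (f 1.6902) (f 1.6903) by
        constructor <;> · simp only [hf] ; norm_num)
  obtain ⟨b, hbmem, hb⟩ :=
    intermediate_value_Ioo' (by norm_num : (-1.5051:ℝ) ≤ -1.5050) hcont.continuousOn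
      (show (0:ℝ) ∈ Set.Ioo (f (-1.5050)) (f (-1.5051)) by
        constructor <;> · simp only [hf] ; norm_num)
  obtain ⟨ha1, ha2⟩ := hamem
  obtain ⟨hb1, hb2⟩ := hbmem
  have ha' : a ^ 4 - a ^ 3 - 2 * a ^ 2 + 2 * a - 1 = 0 := ha
  have hb' : b ^ 4 - b ^ 3 - 2 * b ^ 2 + 2 * b - 1 = 0 := hb
  have hne : a - b ≠ 0 := by intro h; nlinarith
  have hE1 : -1 - (a * b) * (a + b) * (a + b - 1) + (a * b) ^ 2 + 2 * (a * b) = 0 := by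
    have h : (a - b) * (-1 - (a * b) * (a + b) * (a + b - 1) + (a * b) ^ 2 + 2 * (a * b)) = 0 := by
      linear_combination (-b) * ha' + a * hb'
    rcases mul_eq_zero.mp h with h' | h'
    · exact absurd h' hne
    · exact h'
  have hE2 : (a + b) + (a * b) ^ 2 * (a + b - 1) - 2 * (a * b) = 0 := by
    have h : (a - b) * ((a + b) + (a * b) ^ 2 * (a + b - 1) - 2 * (a * b)) = 0 := by
      linear_combination (b ^ 2) * ha' + (-(a ^ 2)) * hb'
    rcases mul_eq_zero.mp h with h' | h'
    · exact absurd h' hne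
    · exact h'
  -- bounds on a*b
  have habu : a * b < -2.5437 := by nlinarith
  have habl : -2.5441 < a * b := by nlinarith
  have habne : a * b ≠ 0 := by nlinarith
  -- real factorization
  have hfac : ∀ x : ℝ, (a * b) * (x ^ 4 - x ^ 3 - 2 * x ^ 2 + 2 * x - 1)
      = (x - a) * (x - b) * ((a * b) * x ^ 2 + (a * b) * (a + b - 1) * x - 1) := by
    intro x
    linear_combination (-(x ^ 2)) * hE1 + (-x) * hE2
  -- the quadratic factor is negative for all real x
  have hquad : ∀ x : ℝ, (a * b) * x ^ 2 + (a * b) * (a + b - 1) * x - 1 < 0 := by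
    intro x
    have hb2 : (a + b - 1) ^ 2 < 0.665 := by nlinarith
    have hsq : 0 ≤ -(a * b) * (2 * x + (a + b - 1)) ^ 2 :=
      mul_nonneg (by nlinarith) (sq_nonneg _)
    nlinarith [hsq, hb2, sq_nonneg (2 * x + (a + b - 1))]
  refine ⟨a, b, ⟨ha1, ha2⟩, ⟨hb1, hb2⟩, ?_, ?_⟩
  · intro x
    constructor
    · intro hx
      have h0 : (x - a) * (x - b) * ((a * b) * x ^ 2 + (a * b) * (a + b - 1) * x - 1) = 0 := by
        rw [← hfac, hx, mul_zero]
      rcases mul_eq_zero.mp h0 with h | h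
      · rcases mul_eq_zero.mp h with h | h
        · left; linarith [sub_eq_zero.mp h]
        · right; linarith [sub_eq_zero.mp h]
      · exact absurd h (ne_of_lt (hquad x))
    · rintro (rfl | rfl)
      · exact ha'
      · exact hb'
  · intro z hz him
    -- complex factorization
    have hE1C : (-1 : ℂ) - ((a:ℂ) * b) * ((a:ℂ) + b) * ((a:ℂ) + b - 1) + ((a:ℂ) * b) ^ 2
        + 2 * ((a:ℂ) * b) = 0 := by exact_mod_cast congrArg (Complex.ofReal) hE1
    have hE2C : ((a:ℂ) + b) + ((a:ℂ) * b) ^ 2 * ((a:ℂ) + b - 1) - 2 * ((a:ℂ) * b) = 0 := by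
      exact_mod_cast congrArg (Complex.ofReal) hE2
    have hfacC : ((a:ℂ) * b) * (z ^ 4 - z ^ 3 - 2 * z ^ 2 + 2 * z - 1)
        = (z - a) * (z - b) * (((a:ℂ) * b) * z ^ 2 + ((a:ℂ) * b) * ((a:ℂ) + b - 1) * z - 1) := by
      linear_combination (-(z ^ 2)) * hE1C + (-z) * hE2C
    have h0 : (z - a) * (z - b) * (((a:ℂ) * b) * z ^ 2 + ((a:ℂ) * b) * ((a:ℂ) + b - 1) * z - 1)
        = 0 := by rw [← hfacC, hz, mul_zero]
    have hza : z - (a:ℂ) ≠ 0 := by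
      intro h
      apply him
      have : z = (a:ℂ) := sub_eq_zero.mp h
      rw [this]; simp
    have hzb : z - (b:ℂ) ≠ 0 := by
      intro h
      apply him
      have : z = (b:ℂ) := sub_eq_zero.mp h
      rw [this]; simp
    have hQ : ((a:ℂ) * b) * z ^ 2 + ((a:ℂ) * b) * ((a:ℂ) + b - 1) * z - 1 = 0 := by
      rcases mul_eq_zero.mp h0 with h | h
      · rcases mul_eq_zero.mp h with h | h
        · exact absurd h hza
        · exact absurd h hzb
      · exact h
    have hQc : ((a:ℂ) * b) * (starRingEnd ℂ z) ^ 2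
        + ((a:ℂ) * b) * ((a:ℂ) + b - 1) * (starRingEnd ℂ z) - 1 = 0 := by
      have h := congrArg (starRingEnd ℂ) hQ
      simpa using h
    have hdiff : ((a:ℂ) * b) * (z - starRingEnd ℂ z) * (z + starRingEnd ℂ z + ((a:ℂ) + b - 1))
        = 0 := by linear_combination hQ - hQc
    have hzc : z - starRingEnd ℂ z ≠ 0 := by
      intro h
      apply him
      have := sub_eq_zero.mp h
      exact (Complex.conj_eq_iff_im.mp this.symm)
    have habneC : ((a:ℂ) * b) ≠ 0 := by exact_mod_cast habne
    have hsum : z + starRingEnd ℂ z + ((a:ℂ) + b - 1) = 0 := by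
      rcases mul_eq_zero.mp hdiff with h | h
      · rcases mul_eq_zero.mp h with h | h
        · exact absurd h habneC
        · exact absurd h hzc
      · exact h
    have hzz : ((a:ℂ) * b) * (z * starRingEnd ℂ z) = -1 := by
      linear_combination ((a:ℂ) * b * z) * hsum - hQ
    rw [Complex.mul_conj] at hzz
    have hzzR : (a * b) * Complex.normSq z = -1 := by exact_mod_cast hzz
    have hns : Complex.normSq z < 1 := by nlinarith [Complex.normSq_nonneg z]
    have habs : ‖z‖ ^ 2 = Complex.normSq z := Complex.sq_norm z
    have h1 : ‖z‖ ^ 2 < 1 ^ 2 := by rw [habs]; simpa using hns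
    exact lt_of_pow_lt_pow_left₀ 2 (by norm_num) h1
end

section
/- Let F : A ⥤q B be a child-bijective prefunctor of quivers and fix a vertex a of A. Then for every n ∈ ℕ, the map induced by F from {paths of length n in A starting at a} (pairs of an endpoint a' and a path a ⟶ a' of length n) to {paths of length n in B starting at F a} is a bijection. In particular, F induces a bijection between all paths in A starting at a and all paths in B starting at F a. -/
/-- A prefunctor is *child-bijective* if for every vertex `a`, the induced map on
out-arrows `Σ a', (a ⟶ a') → Σ b', (F a ⟶ b')` is a bijection. -/
def Prefunctor.ChildBijective {A B : Type*} [Quiver A] [Quiver B] (F : A ⥤q B) : Prop :=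
  ∀ a : A, Function.Bijective
    (fun e : Σ a', a ⟶ a' => (⟨F.obj e.1, F.map e.2⟩ : Σ b', F.obj a ⟶ b'))

/-- `Prefunctor.mapPath` preserves path length. -/
lemma Prefunctor.mapPath_length {A B : Type*} [Quiver A] [Quiver B] (F : A ⥤q B)
    {a b : A} (p : Quiver.Path a b) : (F.mapPath p).length = p.length := by
  induction p with
  | nil => rfl
  | cons p e ih => simp [Prefunctor.mapPath, Quiver.Path.length, ih]


/-- Split off the last edge of a path (as a sigma), `none` for nil. -/
private def pathSplit {B : Type*} [Quiver B] {a : B} :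
    (Σ b, Quiver.Path a b) → Option ((Σ b, Quiver.Path a b) × (Σ b c : B, b ⟶ c))
  | ⟨_, .nil⟩ => none
  | ⟨_, .cons p e⟩ => some (⟨_, p⟩, ⟨_, _, e⟩)

private lemma total_inj {A B : Type*} [Quiver A] [Quiver B] (F : A ⥤q B)
    (hF : F.ChildBijective) {a : A} :
    ∀ {c : A} (p : Quiver.Path a c) {c' : A} (q : Quiver.Path a c'),
      (⟨F.obj c, F.mapPath p⟩ : Σ b, Quiver.Path (F.obj a) b) = ⟨F.obj c', F.mapPath q⟩ →
      (⟨c, p⟩ : Σ x, Quiver.Path a x) = ⟨c', q⟩ := by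
  intro c p
  induction p with
  | nil =>
    intro c' q h
    cases q with
    | nil => rfl
    | cons q' e' =>
      have := congrArg (fun y : Σ b, Quiver.Path (F.obj a) b => y.2.length) h
      simp [Prefunctor.mapPath_length] at this
  | cons p e ih =>
    intro c' q h
    cases q with
    | nil =>
      have := congrArg (fun y : Σ b, Quiver.Path (F.obj a) b => y.2.length) h
      simp [Prefunctor.mapPath_length] at this
    | cons q' e' =>
      have hs := congrArg pathSplit h
      simp only [Prefunctor.mapPath, pathSplit, Option.some.injEq, Prod.mk.injEq] at hs
      obtain ⟨h1, h2⟩ := hs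
      have h1' := ih q' h1
      obtain ⟨rfl, h1''⟩ := Sigma.mk.inj_iff.mp h1'
      have : p = q' := eq_of_heq h1''
      subst this
      obtain ⟨-, h2'⟩ := Sigma.mk.inj_iff.mp h2
      have h2'' : (⟨F.obj _, F.map e⟩ : Σ b', F.obj _ ⟶ b') = ⟨F.obj c', F.map e'⟩ :=
        eq_of_heq h2'
      have := (hF _).injective (a₁ := ⟨_, e⟩) (a₂ := ⟨_, e'⟩) h2''
      obtain ⟨rfl, he⟩ := Sigma.mk.inj_iff.mp this
      have : e = e' := eq_of_heq he
      subst this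
      rfl

private lemma total_surj {A B : Type*} [Quiver A] [Quiver B] (F : A ⥤q B)
    (hF : F.ChildBijective) {a : A} :
    ∀ {b : B} (p : Quiver.Path (F.obj a) b),
      ∃ x : Σ a', Quiver.Path a a',
        (⟨F.obj x.1, F.mapPath x.2⟩ : Σ b', Quiver.Path (F.obj a) b') = ⟨b, p⟩ := by
  intro b p
  induction p with
  | nil => exact ⟨⟨a, .nil⟩, rfl⟩
  | cons p e ih =>
    obtain ⟨⟨a', q⟩, hq⟩ := ih
    obtain ⟨h1, h2⟩ := Sigma.mk.inj_iff.mp hq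
    subst h1
    have h2' := eq_of_heq h2
    subst h2'
    obtain ⟨⟨a'', e'⟩, he⟩ := (hF a').surjective ⟨_, e⟩
    obtain ⟨h3, h4⟩ := Sigma.mk.inj_iff.mp he
    subst h3
    have h4' := eq_of_heq h4
    subst h4'
    exact ⟨⟨a'', q.cons e'⟩, rfl⟩

/-- A child-bijective prefunctor induces, for each vertex `a` and each
`n`, a bijection between paths of length `n` starting at `a` and paths of length `n`
starting at `F a`; in particular, a bijection between all paths starting at `a` and all
paths starting at `F a`. -/
theorem childBijective_paths_bijective {A B : Type*} [Quiver A] [Quiver B] (F : A ⥤q B)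
    (hF : F.ChildBijective) (a : A) :
    (∀ n : ℕ, Function.Bijective
      (fun x : {x : Σ a', Quiver.Path a a' // x.2.length = n} =>
        (⟨⟨F.obj x.1.1, F.mapPath x.1.2⟩, by rw [Prefunctor.mapPath_length]; exact x.2⟩ :
          {y : Σ b', Quiver.Path (F.obj a) b' // y.2.length = n}))) ∧
    Function.Bijective
      (fun x : Σ a', Quiver.Path a a' =>
        (⟨F.obj x.1, F.mapPath x.2⟩ : Σ b', Quiver.Path (F.obj a) b')) := by
  have hinj : Function.Injective
      (fun x : Σ a', Quiver.Path a a' =>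
        (⟨F.obj x.1, F.mapPath x.2⟩ : Σ b', Quiver.Path (F.obj a) b')) := by
    rintro ⟨c, p⟩ ⟨c', q⟩ h
    exact total_inj F hF p q h
  have hsurj : Function.Surjective
      (fun x : Σ a', Quiver.Path a a' =>
        (⟨F.obj x.1, F.mapPath x.2⟩ : Σ b', Quiver.Path (F.obj a) b')) := by
    rintro ⟨b, p⟩
    exact total_surj F hF p
  refine ⟨fun n => ⟨?_, ?_⟩, hinj, hsurj⟩
  · rintro ⟨x, hx⟩ ⟨y, hy⟩ h
    apply Subtype.ext
    exact hinj (congrArg Subtype.val h)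
  · rintro ⟨⟨b, p⟩, hp⟩
    obtain ⟨⟨c, q⟩, hq⟩ := hsurj ⟨b, p⟩
    refine ⟨⟨⟨c, q⟩, ?_⟩, ?_⟩
    · have := congrArg (fun y : Σ b', Quiver.Path (F.obj a) b' => y.2.length) hq
      simpa [Prefunctor.mapPath_length] using this.trans hp
    · exact Subtype.ext hq
end
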